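/- Let F be a field of characteristic 0 and let B be an n×n symmetric matrix over F with qpr(B) = q_1 q_2 ⋯ q_{n−1} A, where q_k ∈ {A, S} for k = 1, …, n−1. Then there exists an (n+1)×(n+1) symmetric matrix B' over F such that qpr(B') = q_1 q_2 ⋯ q_{n−1} S A. -/

import Mathlib

open Matrix

/-- The minor of a square matrix `B` lying in the rows indexed by `α` and the columns
indexed by `β` (each listed in increasing order); junk value `0` if `α.card ≠ β.card`. -/
def qMinor {R : Type*} [CommRing R] {m : Type*} [Fintype m] [LinearOrder m]
    (B : Matrix m m R) (α β : Finset m) : R :=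
  if h : β.card = α.card then
    (Matrix.of fun i j : Fin α.card =>
      B (α.orderEmbOfFin rfl i) (β.orderEmbOfFin h j)).det
  else 0

/-- `α` and `β` index a quasi-principal submatrix of order `k`, i.e.
`|α| = |β| = k` and `k - 1 ≤ |α ∩ β| (≤ k)`. -/
def IsQPPair {m : Type*} [DecidableEq m] (k : ℕ) (α β : Finset m) : Prop :=
  α.card = k ∧ β.card = k ∧ k - 1 ≤ (α ∩ β).card

/-- All quasi-principal minors of `B` of order `k` are nonzero. -/
def QPAllNonzero {R : Type*} [CommRing R] {m : Type*} [Fintype m] [LinearOrder m]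
    (B : Matrix m m R) (k : ℕ) : Prop :=
  ∀ α β : Finset m, IsQPPair k α β → qMinor B α β ≠ 0

/-- All quasi-principal minors of `B` of order `k` are zero. -/
def QPAllZero {R : Type*} [CommRing R] {m : Type*} [Fintype m] [LinearOrder m]
    (B : Matrix m m R) (k : ℕ) : Prop :=
  ∀ α β : Finset m, IsQPPair k α β → qMinor B α β = 0

/-- The three possible letters of a qpr-sequence. -/
inductive QPR : Type
  | A
  | S
  | N
deriving DecidableEq

open Classical in
/-- The letter of the qpr-sequence of `B` corresponding to order `k`:
`A` if all quasi-principal minors of order `k` are nonzero, `N` if all are zero,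
and `S` otherwise. -/
noncomputable def qprEntry {R : Type*} [CommRing R] {m : Type*} [Fintype m] [LinearOrder m]
    (B : Matrix m m R) (k : ℕ) : QPR :=
  if QPAllNonzero B k then QPR.A
  else if QPAllZero B k then QPR.N
  else QPR.S

/-- A sequence of letters `q 0, …, q (n-1)` (standing for `q_1 ⋯ q_n`) is attainable
over `F` if it is the qpr-sequence of an `n × n` symmetric matrix over `F`. -/
def Attainable (F : Type*) [Field F] {n : ℕ} (q : Fin n → QPR) : Prop :=
  ∃ B : Matrix (Fin n) (Fin n) F, B.IsSymm ∧ ∀ k : Fin n, qprEntry B ((k : ℕ) + 1) = q k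

/-- The Schur complement `B/B[γ] = B[γᶜ] - B[γᶜ, γ] B[γ]⁻¹ B[γ, γᶜ]`,
with rows and columns indexed by `γᶜ` (indexing inherited from `B`). -/
noncomputable def schurCompl {R : Type*} [CommRing R] {n : ℕ}
    (B : Matrix (Fin n) (Fin n) R) (γ : Finset (Fin n)) :
    Matrix ↥(γᶜ) ↥(γᶜ) R :=
  B.submatrix (fun i : ↥(γᶜ) => (i : Fin n)) (fun j : ↥(γᶜ) => (j : Fin n)) -
    B.submatrix (fun i : ↥(γᶜ) => (i : Fin n)) (fun j : ↥γ => (j : Fin n)) *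
      (B.submatrix (fun i : ↥γ => (i : Fin n)) fun j : ↥γ => (j : Fin n))⁻¹ *
      B.submatrix (fun i : ↥γ => (i : Fin n)) fun j : ↥(γᶜ) => (j : Fin n)

/-- The `(m+1) × (m+1)` matrix with block form `[[A, x], [yᵀ, b]]`. -/
def borderMat {R : Type*} [CommRing R] {m : ℕ} (A : Matrix (Fin m) (Fin m) R)
    (x y : Fin m → R) (b : R) : Matrix (Fin (m + 1)) (Fin (m + 1)) R :=
  Matrix.of fun i j =>
    if hi : (i : ℕ) < m then
      if hj : (j : ℕ) < m then A ⟨i, hi⟩ ⟨j, hj⟩ else x ⟨i, hi⟩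
    else
      if hj : (j : ℕ) < m then y ⟨j, hj⟩ else b

/-! ### Auxiliary material for the proof of `stmt_11` -/

set_option linter.unusedSectionVars false
set_option maxHeartbeats 1000000

section QMinorBasic
variable {R : Type*} [CommRing R] {m : Type*} [Fintype m] [LinearOrder m]

lemma qMinor_eq_det (B : Matrix m m R) {α β : Finset m} {k : ℕ}
    (hα : α.card = k) (hβ : β.card = k) :
    qMinor B α β = (Matrix.of fun i j : Fin k =>
      B (α.orderEmbOfFin hα i) (β.orderEmbOfFin hβ j)).det := by
  rw [qMinor, dif_pos (hβ.trans hα.symm)]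
  rw [← Matrix.det_submatrix_equiv_self (finCongr hα)]
  congr 1

lemma qMinor_map {S : Type*} [CommRing S] (f : R →+* S) (B : Matrix m m R) (α β : Finset m) :
    qMinor (B.map f) α β = f (qMinor B α β) := by
  unfold qMinor
  split_ifs with h
  · rw [RingHom.map_det]
    congr 1
  · exact (map_zero f).symm

lemma qMinor_symm {B : Matrix m m R} (hB : B.IsSymm) (α β : Finset m) :
    qMinor B α β = qMinor B β α := by
  rcases eq_or_ne β.card α.card with h | h
  · rw [qMinor_eq_det B (k := α.card) rfl h, qMinor_eq_det B (k := α.card) h rfl,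
      ← Matrix.det_transpose]
    congr 1
    ext i j
    simp only [Matrix.transpose_apply, Matrix.of_apply]
    exact hB.apply _ _
  · rw [qMinor, dif_neg h, qMinor, dif_neg (fun h' => h h'.symm)]

lemma exists_perm_comp {k : ℕ} {s : Finset m} (hs : s.card = k)
    {r : Fin k → m} (hr : Function.Injective r) (hmem : ∀ i, r i ∈ s) :
    ∃ σ : Equiv.Perm (Fin k), ∀ i, r i = s.orderEmbOfFin hs (σ i) := by
  have hcard : Fintype.card {x // x ∈ s} = k := by simp [hs]
  let r' : Fin k → {x // x ∈ s} := fun i => ⟨r i, hmem i⟩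
  have hr' : Function.Injective r' := fun a b hab => hr (congrArg Subtype.val hab)
  have hbij : Function.Bijective r' := by
    rw [Fintype.bijective_iff_injective_and_card]
    exact ⟨hr', by simp [hcard]⟩
  let e1 : Fin k ≃ {x // x ∈ s} := Equiv.ofBijective r' hbij
  let e2 : Fin k ≃o {x // x ∈ s} := s.orderIsoOfFin hs
  refine ⟨e1.trans e2.toEquiv.symm, fun i => ?_⟩
  have h1 : (s.orderIsoOfFin hs) ((e1.trans e2.toEquiv.symm) i) = e1 i := by
    simp [e2]
  have h2 := congrArg Subtype.val h1
  rw [Finset.coe_orderIsoOfFin_apply] at h2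
  exact h2.symm

lemma det_reindex_eq_qMinor (B : Matrix m m R) {k : ℕ} {s t : Finset m}
    (hs : s.card = k) (ht : t.card = k)
    {r c : Fin k → m} (hr : Function.Injective r) (hc : Function.Injective c)
    (hrs : ∀ i, r i ∈ s) (hct : ∀ i, c i ∈ t) :
    ∃ ε : R, (ε = 1 ∨ ε = -1) ∧
      (Matrix.of fun i j : Fin k => B (r i) (c j)).det = ε * qMinor B s t := by
  obtain ⟨σ, hσ⟩ := exists_perm_comp hs hr hrs
  obtain ⟨τ, hτ⟩ := exists_perm_comp ht hc hct
  have hM : (Matrix.of fun i j : Fin k => B (r i) (c j)) =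
      ((Matrix.of fun i j : Fin k =>
        B (s.orderEmbOfFin hs i) (t.orderEmbOfFin ht j)).submatrix σ id).submatrix id τ := by
    ext i j
    simp [hσ i, hτ j]
  refine ⟨(Equiv.Perm.sign σ : ℤ) * (Equiv.Perm.sign τ : ℤ), ?_, ?_⟩
  · rcases Int.units_eq_one_or (Equiv.Perm.sign σ) with h1 | h1 <;>
      rcases Int.units_eq_one_or (Equiv.Perm.sign τ) with h2 | h2 <;>
      simp [h1, h2]
  · rw [hM, Matrix.det_permute', Matrix.det_permute, qMinor_eq_det B hs ht]
    ring

lemma det_reindex_ne_zero (B : Matrix m m R) {k : ℕ} {s t : Finset m}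
    (hs : s.card = k) (ht : t.card = k)
    {r c : Fin k → m} (hr : Function.Injective r) (hc : Function.Injective c)
    (hrs : ∀ i, r i ∈ s) (hct : ∀ i, c i ∈ t) (h : qMinor B s t ≠ 0) :
    (Matrix.of fun i j : Fin k => B (r i) (c j)).det ≠ 0 := by
  obtain ⟨ε, hε, heq⟩ := det_reindex_eq_qMinor B hs ht hr hc hrs hct
  rw [heq]
  rcases hε with rfl | rfl <;> simp [h]

lemma qMinor_empty (B : Matrix m m R) : qMinor B ∅ ∅ = 1 := by
  rw [qMinor_eq_det B (k := 0) Finset.card_empty Finset.card_empty]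
  exact Matrix.det_fin_zero

end QMinorBasic

section QprEntryBasic
variable {R : Type*} [CommRing R] {m : Type*} [Fintype m] [LinearOrder m]
  (B : Matrix m m R) (k : ℕ)

lemma qprEntry_eq_A_iff : qprEntry B k = QPR.A ↔ QPAllNonzero B k := by
  unfold qprEntry
  split_ifs with h1 h2 <;> simp_all

lemma qprEntry_eq_S_iff : qprEntry B k = QPR.S ↔ ¬QPAllNonzero B k ∧ ¬QPAllZero B k := by
  unfold qprEntry
  split_ifs with h1 h2 <;> simp_all

end QprEntryBasic

section BM
variable {R : Type*} [CommRing R] {m : ℕ} (A : Matrix (Fin m) (Fin m) R) (x y : Fin m → R) (b : R)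

@[simp] lemma borderMat_cc (i j : Fin m) :
    borderMat A x y b i.castSucc j.castSucc = A i j := by
  simp [borderMat, i.is_lt, j.is_lt]

@[simp] lemma borderMat_cl (i : Fin m) :
    borderMat A x y b i.castSucc (Fin.last m) = x i := by
  simp [borderMat, i.is_lt]

@[simp] lemma borderMat_lc (j : Fin m) :
    borderMat A x y b (Fin.last m) j.castSucc = y j := by
  simp [borderMat, j.is_lt]

@[simp] lemma borderMat_ll : borderMat A x y b (Fin.last m) (Fin.last m) = b := by
  simp [borderMat]

lemma borderMat_isSymm (hA : A.IsSymm) : (borderMat A x x b).IsSymm := by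
  rw [Matrix.IsSymm]
  ext i j
  rw [Matrix.transpose_apply]
  induction i using Fin.lastCases with
  | last => induction j using Fin.lastCases with
    | last => rfl
    | cast j => simp
  | cast i => induction j using Fin.lastCases with
    | last => simp
    | cast j => simp [hA.apply]

lemma borderMat_map {S : Type*} [CommRing S] (f : R →+* S) :
    (borderMat A x y b).map f = borderMat (A.map f) (f ∘ x) (f ∘ y) (f b) := by
  ext i j
  simp only [Matrix.map_apply, borderMat, Matrix.of_apply]
  split_ifs <;> rfl

end BM

section Iota
variable {n : ℕ}

/-- push a subset of `Fin n` up to `Fin (n+1)` via `castSucc`. -/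
def ι (s : Finset (Fin n)) : Finset (Fin (n + 1)) := s.map Fin.castSuccEmb

@[simp] lemma ι_card (s : Finset (Fin n)) : (ι s).card = s.card := Finset.card_map _

@[simp] lemma mem_ι {s : Finset (Fin n)} {a : Fin (n + 1)} :
    a ∈ ι s ↔ ∃ b ∈ s, Fin.castSucc b = a := by
  simp only [ι, Finset.mem_map, Fin.coe_castSuccEmb]

@[simp] lemma castSucc_mem_ι {s : Finset (Fin n)} {b : Fin n} :
    b.castSucc ∈ ι s ↔ b ∈ s := by
  simp only [mem_ι]
  exact ⟨fun ⟨c, hc, hcb⟩ => by rwa [← Fin.castSucc_inj.1 hcb], fun h => ⟨b, h, rfl⟩⟩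

lemma last_not_mem_ι (s : Finset (Fin n)) : Fin.last n ∉ ι s := by
  simp only [mem_ι]
  rintro ⟨b, _, hb⟩
  exact (Fin.castSucc_lt_last b).ne hb

lemma ι_inter (s t : Finset (Fin n)) : ι (s ∩ t) = ι s ∩ ι t := Finset.map_inter _ _

lemma exists_ι {s' : Finset (Fin (n + 1))} (h : Fin.last n ∉ s') :
    ∃ s : Finset (Fin n), ι s = s' := by
  classical
  refine ⟨s'.preimage Fin.castSucc (Fin.castSucc_injective n).injOn, ?_⟩
  ext a
  simp only [mem_ι, Finset.mem_preimage]
  constructor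
  · rintro ⟨b, hb, rfl⟩; exact hb
  · intro ha
    obtain ⟨b, rfl⟩ := Fin.eq_castSucc_of_ne_last (fun hh => h (hh ▸ ha))
    exact ⟨b, ha, rfl⟩

lemma orderEmbOfFin_ι {s : Finset (Fin n)} {k : ℕ} (hs : s.card = k)
    (h' : (ι s).card = k) (i : Fin k) :
    (ι s).orderEmbOfFin h' i = (s.orderEmbOfFin hs i).castSucc := by
  have h := Finset.orderEmbOfFin_unique h'
    (f := fun i : Fin k => (s.orderEmbOfFin hs i).castSucc)
    (fun i => by simp) (fun a b hab => by
      simpa [Fin.castSucc_lt_castSucc_iff] using (s.orderEmbOfFin hs).strictMono hab)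
  exact (congrFun h i).symm

lemma orderEmbOfFin_insert_last {s : Finset (Fin n)} {k : ℕ} (hs : s.card = k)
    (h' : (insert (Fin.last n) (ι s)).card = k + 1) (i : Fin (k + 1)) :
    (insert (Fin.last n) (ι s)).orderEmbOfFin h' i =
      Fin.lastCases (Fin.last n) (fun t => (s.orderEmbOfFin hs t).castSucc) i := by
  have h := Finset.orderEmbOfFin_unique h'
    (f := fun i : Fin (k+1) =>
      Fin.lastCases (Fin.last n) (fun t => (s.orderEmbOfFin hs t).castSucc) i)
    (fun i => by
      induction i using Fin.lastCases with
      | last => simp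
      | cast t => simp)
    (fun a b hab => by
      induction b using Fin.lastCases with
      | last =>
        induction a using Fin.lastCases with
        | last => exact absurd hab (lt_irrefl _)
        | cast a => simp [Fin.castSucc_lt_last]
      | cast b =>
        induction a using Fin.lastCases with
        | last =>
          exfalso
          rw [Fin.lt_def] at hab
          simp at hab
          omega
        | cast a =>
          simp only [Fin.lastCases_castSucc]
          rw [Fin.castSucc_lt_castSucc_iff] at hab ⊢
          exact (s.orderEmbOfFin hs).strictMono hab)
  exact (congrFun h i).symm

lemma card_insert_last {s : Finset (Fin n)} {k : ℕ} (hs : s.card = k) :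
    (insert (Fin.last n) (ι s)).card = k + 1 := by
  rw [Finset.card_insert_of_notMem (last_not_mem_ι s), ι_card, hs]

lemma orderEmbOfFin_univ {i : Fin n} (h : (Finset.univ : Finset (Fin n)).card = n) :
    (Finset.univ : Finset (Fin n)).orderEmbOfFin h i = i := by
  have h2 := Finset.orderEmbOfFin_unique h (f := fun i : Fin n => i)
    (fun i => Finset.mem_univ i) strictMono_id
  exact (congrFun h2 i).symm

lemma lastCases_mem {s : Finset (Fin n)} {k : ℕ} (h : s.card = k) (i0 : Fin n) :
    ∀ x : Fin (k+1), Fin.lastCases (motive := fun _ => Fin n) i0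
      (fun t => s.orderEmbOfFin h t) x ∈ insert i0 s := by
  intro x
  induction x using Fin.lastCases with
  | last => simp
  | cast t => simp

lemma lastCases_inj {s : Finset (Fin n)} {k : ℕ} {h : s.card = k} {i0 : Fin n}
    (hi0 : i0 ∉ s) :
    Function.Injective (Fin.lastCases (motive := fun _ => Fin n) i0
      (fun t => s.orderEmbOfFin h t)) := by
  intro x y hxy
  induction x using Fin.lastCases with
  | last =>
    induction y using Fin.lastCases with
    | last => rfl
    | cast y =>
      simp only [Fin.lastCases_last, Fin.lastCases_castSucc] at hxy
      exact absurd (hxy ▸ Finset.orderEmbOfFin_mem s h y) hi0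
  | cast x =>
    induction y using Fin.lastCases with
    | last =>
      simp only [Fin.lastCases_last, Fin.lastCases_castSucc] at hxy
      exact absurd (hxy ▸ Finset.orderEmbOfFin_mem s h x) hi0
    | cast y =>
      simp only [Fin.lastCases_castSucc] at hxy
      rw [(s.orderEmbOfFin h).injective hxy]

end Iota

section QMinorIota
variable {R : Type*} [CommRing R] {n : ℕ}

lemma qMinor_borderMat_ι (A : Matrix (Fin n) (Fin n) R) (x y : Fin n → R) (b : R)
    (α β : Finset (Fin n)) :
    qMinor (borderMat A x y b) (ι α) (ι β) = qMinor A α β := by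
  rcases eq_or_ne β.card α.card with h | h
  · rw [qMinor_eq_det (borderMat A x y b) (α := ι α) (β := ι β) (k := α.card)
      (by rw [ι_card]) (by rw [ι_card, h]),
      qMinor_eq_det A (k := α.card) rfl h]
    congr 1
    ext i j
    simp only [Matrix.of_apply]
    rw [orderEmbOfFin_ι (rfl : α.card = α.card), orderEmbOfFin_ι h, borderMat_cc]
  · rw [qMinor, dif_neg (by rw [ι_card, ι_card]; exact h), qMinor, dif_neg h]

lemma qMinor_univ (B : Matrix (Fin n) (Fin n) R) :
    qMinor B Finset.univ Finset.univ = B.det := by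
  rw [qMinor_eq_det B (Finset.card_fin n) (Finset.card_fin n)]
  congr 1
  ext i j
  simp only [Matrix.of_apply]
  rw [orderEmbOfFin_univ, orderEmbOfFin_univ]

end QMinorIota

section DetHelp
variable {R : Type*} [CommRing R] {k : ℕ}

lemma det_last_row (M : Matrix (Fin (k+1)) (Fin (k+1)) R)
    (h0 : ∀ j : Fin k, M (Fin.last k) j.castSucc = 0) :
    M.det = M (Fin.last k) (Fin.last k) * (M.submatrix Fin.castSucc Fin.castSucc).det := by
  rw [Matrix.det_succ_row M (Fin.last k), Fin.sum_univ_castSucc]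
  have hz : ∀ t ∈ (Finset.univ : Finset (Fin k)),
      (-1 : R) ^ (((Fin.last k) : ℕ) + ((t.castSucc : Fin (k+1)) : ℕ)) *
        M (Fin.last k) t.castSucc *
        (M.submatrix (Fin.last k).succAbove (t.castSucc).succAbove).det = 0 := by
    intro t _
    rw [h0 t]
    ring
  rw [Finset.sum_eq_zero hz, zero_add, Fin.succAbove_last, Fin.val_last]
  rw [Even.neg_one_pow (Even.add_self k), one_mul]

lemma det_last_col (M : Matrix (Fin (k+1)) (Fin (k+1)) R)
    (h0 : ∀ i : Fin k, M i.castSucc (Fin.last k) = 0) :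
    M.det = M (Fin.last k) (Fin.last k) * (M.submatrix Fin.castSucc Fin.castSucc).det := by
  rw [← Matrix.det_transpose M, det_last_row Mᵀ (fun j => h0 j)]
  rw [← Matrix.transpose_submatrix, Matrix.det_transpose]
  rfl

lemma det_updateColumn_single (M : Matrix (Fin (k+1)) (Fin (k+1)) R) (c : R) :
    (M.updateCol (Fin.last k) (Pi.single (Fin.last k) c)).det =
      c * (M.submatrix Fin.castSucc Fin.castSucc).det := by
  set A := M.updateCol (Fin.last k) (Pi.single (Fin.last k) c) with hA
  have h0 : ∀ i : Fin k, A i.castSucc (Fin.last k) = 0 := by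
    intro i
    rw [hA, Matrix.updateCol_self]
    simp [Pi.single_apply, (Fin.castSucc_lt_last i).ne]
  rw [det_last_col A h0]
  have hsub : A.submatrix Fin.castSucc Fin.castSucc = M.submatrix Fin.castSucc Fin.castSucc := by
    ext i j
    simp only [Matrix.submatrix_apply]
    rw [hA, Matrix.updateCol_ne (Fin.castSucc_lt_last j).ne]
  rw [hsub]
  congr 1
  rw [hA, Matrix.updateCol_self]
  simp [Pi.single_apply]

end DetHelp

section PQ
variable {R : Type*} [CommRing R] {k m : ℕ}

lemma det_pq (B : Matrix (Fin (m+1)) (Fin (m+1)) R)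
    (a c : Fin k → Fin (m+1)) (p q : Fin (m+1))
    (hpc : ∃ t0, c t0 = p) (hqa : ∃ s0, a s0 = q)
    (hA0 : (Matrix.of fun s t : Fin k => B (a s) (c t)).det = 0)
    (M : Matrix (Fin (k+1)) (Fin (k+1)) R)
    (hM1 : ∀ s t, M s.castSucc t.castSucc = B (a s) (c t))
    (hM2 : ∀ t, M (Fin.last k) t.castSucc = B p (c t) + B q (c t))
    (hM3 : ∀ s, M s.castSucc (Fin.last k) = B (a s) p + B (a s) q)
    (hM4 : M (Fin.last k) (Fin.last k) = 0) :
    M.det = (Matrix.of fun s t : Fin (k+1) =>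
      B (Fin.lastCases p a s) (Fin.lastCases q c t)).det := by
  classical
  set Rv : Fin (m+1) → Fin (k+1) → R :=
    fun w => Fin.lastCases 0 (fun t => B w (c t)) with hRv
  set Cv : Fin (m+1) → Fin (k+1) → R :=
    fun u => Fin.lastCases 0 (fun s => B (a s) u) with hCv
  set Y : Fin (m+1) → Fin (m+1) → Matrix (Fin (k+1)) (Fin (k+1)) R := fun u w =>
    Matrix.of fun s t => B (Fin.lastCases w a s) (Fin.lastCases u c t) with hY
  set X : Fin (m+1) → Fin (m+1) → Matrix (Fin (k+1)) (Fin (k+1)) R := fun u w =>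
    Matrix.updateCol (Matrix.updateRow M (Fin.last k) (Rv w)) (Fin.last k) (Cv u) with hX
  have hYsub : ∀ u w, (Y u w).submatrix Fin.castSucc Fin.castSucc =
      (Matrix.of fun s t : Fin k => B (a s) (c t)) := by
    intro u w
    ext s t
    simp [hY]
  have hXY : ∀ u w, (X u w).det = (Y u w).det := by
    intro u w
    have h1 : X u w = Matrix.updateCol (Y u w) (Fin.last k) (Cv u) := by
      ext i j
      rcases eq_or_ne j (Fin.last k) with rfl | hj
      · rw [hX]
        simp only [Matrix.updateCol_self]
      · obtain ⟨t, rfl⟩ := Fin.eq_castSucc_of_ne_last hj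
        rw [hX]
        simp only [Matrix.updateCol_ne hj]
        induction i using Fin.lastCases with
        | last => rw [Matrix.updateRow_self]; simp [hRv, hY]
        | cast s =>
          rw [Matrix.updateRow_ne (Fin.castSucc_lt_last s).ne]
          rw [hM1]
          simp [hY]
    have hcol : (fun i => (Y u w) i (Fin.last k)) =
        Cv u + Pi.single (Fin.last k) (B w u) := by
      funext i
      induction i using Fin.lastCases with
      | last => simp [hY, hCv, Pi.single_apply]
      | cast s =>
        simp [hY, hCv, Pi.single_apply, (Fin.castSucc_lt_last s).ne]
    have h2 : (Y u w).det =
        (Matrix.updateCol (Y u w) (Fin.last k) (Cv u)).det +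
          (Matrix.updateCol (Y u w) (Fin.last k)
            (Pi.single (Fin.last k) (B w u))).det := by
      rw [← Matrix.det_updateCol_add]
      rw [← hcol, Matrix.updateCol_eq_self]
    rw [h1, h2, det_updateColumn_single, hYsub, hA0, mul_zero, add_zero]
  have hrow : M (Fin.last k) = Rv p + Rv q := by
    funext j
    induction j using Fin.lastCases with
    | last => simp [hRv, hM4]
    | cast t => simp [hRv, hM2 t]
  have hsplit1 : M.det = (Matrix.updateRow M (Fin.last k) (Rv p)).det +
      (Matrix.updateRow M (Fin.last k) (Rv q)).det := by
    rw [← Matrix.det_updateRow_add, ← hrow, Matrix.updateRow_eq_self]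
  have hsplit2 : ∀ w, (Matrix.updateRow M (Fin.last k) (Rv w)).det =
      (X p w).det + (X q w).det := by
    intro w
    have hcolw : (fun i => (Matrix.updateRow M (Fin.last k) (Rv w)) i (Fin.last k)) =
        Cv p + Cv q := by
      funext i
      induction i using Fin.lastCases with
      | last => rw [Matrix.updateRow_self]; simp [hRv, hCv]
      | cast s =>
        rw [Matrix.updateRow_ne (Fin.castSucc_lt_last s).ne]
        simp [hCv, hM3 s]
    rw [hX, ← Matrix.det_updateCol_add]
    rw [← hcolw, Matrix.updateCol_eq_self]
  have hYpp : ∀ w, (Y p w).det = 0 := by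
    intro w
    obtain ⟨t0, ht0⟩ := hpc
    refine Matrix.det_zero_of_column_eq (Fin.castSucc_lt_last t0).ne fun i => ?_
    simp [hY, ht0]
  have hYqq : (Y q q).det = 0 := by
    obtain ⟨s0, hs0⟩ := hqa
    refine Matrix.det_zero_of_row_eq (Fin.castSucc_lt_last s0).ne ?_
    funext j
    simp [hY, hs0]
  rw [hsplit1, hsplit2 p, hsplit2 q, hXY, hXY, hXY, hXY, hYpp, hYpp, hYqq]
  simp [hY]

end PQ

section Witness
variable {F : Type*} [Field F] {m : ℕ} {k : ℕ} {B : Matrix (Fin (m+1)) (Fin (m+1)) F}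

lemma exists_orderEmbOfFin_eq {n : ℕ} {s : Finset (Fin n)} {k : ℕ} (h : s.card = k)
    {p : Fin n} (hp : p ∈ s) : ∃ t, s.orderEmbOfFin h t = p := by
  have h2 : p ∈ Set.range (s.orderEmbOfFin h) := by
    rw [Finset.range_orderEmbOfFin]
    exact hp
  exact h2

lemma witnessR (hB : B.IsSymm) {α β : Finset (Fin (m+1))} (hα : α.card = k)
    (hβ : β.card = k + 1) {i0 : Fin (m+1)} (hi0 : i0 ∉ α)
    (h : qMinor B (insert i0 α) β ≠ 0) (b : F) :
    qMinor (borderMat B (B.mulVec (Pi.single i0 1)) (B.mulVec (Pi.single i0 1)) b)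
      (insert (Fin.last (m+1)) (ι α)) (ι β) ≠ 0 := by
  have hα' : (insert (Fin.last (m+1)) (ι α)).card = k + 1 := card_insert_last hα
  have hβ' : (ι β).card = k + 1 := by rw [ι_card, hβ]
  rw [qMinor_eq_det _ hα' hβ']
  have hM : (Matrix.of fun i j : Fin (k+1) =>
      (borderMat B (B.mulVec (Pi.single i0 1)) (B.mulVec (Pi.single i0 1)) b)
        ((insert (Fin.last (m+1)) (ι α)).orderEmbOfFin hα' i) ((ι β).orderEmbOfFin hβ' j)) =
      Matrix.of fun i j : Fin (k+1) =>
        B (Fin.lastCases (motive := fun _ => Fin (m+1)) i0 (fun s => α.orderEmbOfFin hα s) i)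
          (β.orderEmbOfFin hβ j) := by
    ext i j
    simp only [Matrix.of_apply]
    rw [orderEmbOfFin_insert_last hα hα', orderEmbOfFin_ι hβ hβ']
    induction i using Fin.lastCases with
    | last =>
      simp only [Fin.lastCases_last, borderMat_lc, Matrix.mulVec_single_one, Matrix.col_apply, mul_one]
      exact hB.apply i0 (β.orderEmbOfFin hβ j)
    | cast s =>
      simp only [Fin.lastCases_castSucc, borderMat_cc]
  rw [hM]
  exact det_reindex_ne_zero B (s := insert i0 α) (t := β)
    (by rw [Finset.card_insert_of_notMem hi0, hα]) hβ
    (lastCases_inj hi0) (β.orderEmbOfFin hβ).injective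
    (lastCases_mem hα i0) (fun j => Finset.orderEmbOfFin_mem β hβ j) h

lemma witnessPi (hB : B.IsSymm) {α β : Finset (Fin (m+1))} (hα : α.card = k)
    (hβ : β.card = k) {i0 : Fin (m+1)} (hi0a : i0 ∉ α) (hi0b : i0 ∉ β)
    (h : qMinor B (insert i0 α) (insert i0 β) ≠ 0) :
    qMinor (borderMat B (B.mulVec (Pi.single i0 1)) (B.mulVec (Pi.single i0 1)) (B i0 i0))
      (insert (Fin.last (m+1)) (ι α)) (insert (Fin.last (m+1)) (ι β)) ≠ 0 := by
  have hα' := card_insert_last hα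
  have hβ' := card_insert_last hβ
  rw [qMinor_eq_det _ hα' hβ']
  have hM : (Matrix.of fun i j : Fin (k+1) =>
      (borderMat B (B.mulVec (Pi.single i0 1)) (B.mulVec (Pi.single i0 1)) (B i0 i0))
        ((insert (Fin.last (m+1)) (ι α)).orderEmbOfFin hα' i)
        ((insert (Fin.last (m+1)) (ι β)).orderEmbOfFin hβ' j)) =
      Matrix.of fun i j : Fin (k+1) =>
        B (Fin.lastCases (motive := fun _ => Fin (m+1)) i0 (fun s => α.orderEmbOfFin hα s) i)
          (Fin.lastCases (motive := fun _ => Fin (m+1)) i0 (fun t => β.orderEmbOfFin hβ t) j) := by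
    ext i j
    simp only [Matrix.of_apply]
    rw [orderEmbOfFin_insert_last hα hα', orderEmbOfFin_insert_last hβ hβ']
    induction i using Fin.lastCases with
    | last =>
      induction j using Fin.lastCases with
      | last => simp only [Fin.lastCases_last, borderMat_ll]
      | cast t =>
        simp only [Fin.lastCases_last, Fin.lastCases_castSucc, borderMat_lc,
          Matrix.mulVec_single_one, Matrix.col_apply, mul_one]
        exact hB.apply i0 _
    | cast s =>
      induction j using Fin.lastCases with
      | last =>
        simp only [Fin.lastCases_last, Fin.lastCases_castSucc, borderMat_cl,
          Matrix.mulVec_single_one, Matrix.col_apply, mul_one]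
      | cast t =>
        simp only [Fin.lastCases_castSucc, borderMat_cc]
  rw [hM]
  exact det_reindex_ne_zero B (s := insert i0 α) (t := insert i0 β)
    (by rw [Finset.card_insert_of_notMem hi0a, hα])
    (by rw [Finset.card_insert_of_notMem hi0b, hβ])
    (lastCases_inj hi0a) (lastCases_inj hi0b)
    (lastCases_mem hα i0) (lastCases_mem hβ i0) h

lemma witnessP0 (B : Matrix (Fin (m+1)) (Fin (m+1)) F) {α β : Finset (Fin (m+1))}
    (hα : α.card = k) (hβ : β.card = k) (h : qMinor B α β ≠ 0) :
    qMinor (borderMat B (B.mulVec 0) (B.mulVec 0) 1)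
      (insert (Fin.last (m+1)) (ι α)) (insert (Fin.last (m+1)) (ι β)) ≠ 0 := by
  have hα' := card_insert_last hα
  have hβ' := card_insert_last hβ
  rw [qMinor_eq_det _ hα' hβ']
  set M := Matrix.of fun i j : Fin (k+1) =>
      (borderMat B (B.mulVec 0) (B.mulVec 0) 1)
        ((insert (Fin.last (m+1)) (ι α)).orderEmbOfFin hα' i)
        ((insert (Fin.last (m+1)) (ι β)).orderEmbOfFin hβ' j) with hMdef
  have h0 : ∀ j : Fin k, M (Fin.last k) j.castSucc = 0 := by
    intro j
    rw [hMdef]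
    simp only [Matrix.of_apply]
    rw [orderEmbOfFin_insert_last hα hα', orderEmbOfFin_insert_last hβ hβ']
    simp
  rw [det_last_row M h0]
  have hc : M (Fin.last k) (Fin.last k) = 1 := by
    rw [hMdef]
    simp only [Matrix.of_apply]
    rw [orderEmbOfFin_insert_last hα hα', orderEmbOfFin_insert_last hβ hβ']
    simp
  have hsub : M.submatrix Fin.castSucc Fin.castSucc = Matrix.of fun s t : Fin k =>
      B (α.orderEmbOfFin hα s) (β.orderEmbOfFin hβ t) := by
    ext s t
    simp only [Matrix.submatrix_apply, Matrix.of_apply, hMdef]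
    rw [orderEmbOfFin_insert_last hα hα', orderEmbOfFin_insert_last hβ hβ']
    simp
  rw [hc, hsub, one_mul, ← qMinor_eq_det B hα hβ]
  exact h

lemma witnessPQ (hB : B.IsSymm) {α β : Finset (Fin (m+1))} (hα : α.card = k)
    (hβ : β.card = k) {p q : Fin (m+1)} (hpβ : p ∈ β) (hpα : p ∉ α) (hqα : q ∈ α)
    (hqβ : q ∉ β) (hA0 : qMinor B α β = 0)
    (hP : qMinor B (insert p α) (insert q β) ≠ 0) :
    qMinor (borderMat B (B.mulVec (Pi.single p 1 + Pi.single q 1))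
        (B.mulVec (Pi.single p 1 + Pi.single q 1)) 0)
      (insert (Fin.last (m+1)) (ι α)) (insert (Fin.last (m+1)) (ι β)) ≠ 0 := by
  have hα' := card_insert_last hα
  have hβ' := card_insert_last hβ
  rw [qMinor_eq_det _ hα' hβ']
  set M := Matrix.of fun i j : Fin (k+1) =>
      (borderMat B (B.mulVec (Pi.single p 1 + Pi.single q 1))
        (B.mulVec (Pi.single p 1 + Pi.single q 1)) 0)
        ((insert (Fin.last (m+1)) (ι α)).orderEmbOfFin hα' i)
        ((insert (Fin.last (m+1)) (ι β)).orderEmbOfFin hβ' j) with hMdef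
  have hM1 : ∀ s t : Fin k, M s.castSucc t.castSucc =
      B (α.orderEmbOfFin hα s) (β.orderEmbOfFin hβ t) := by
    intro s t
    rw [hMdef]
    simp only [Matrix.of_apply]
    rw [orderEmbOfFin_insert_last hα hα', orderEmbOfFin_insert_last hβ hβ']
    simp
  have hM2 : ∀ t : Fin k, M (Fin.last k) t.castSucc =
      B p (β.orderEmbOfFin hβ t) + B q (β.orderEmbOfFin hβ t) := by
    intro t
    rw [hMdef]
    simp only [Matrix.of_apply]
    rw [orderEmbOfFin_insert_last hα hα', orderEmbOfFin_insert_last hβ hβ']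
    simp only [Fin.lastCases_last, Fin.lastCases_castSucc, borderMat_lc,
      Matrix.mulVec_add, Matrix.mulVec_single_one, Matrix.col_apply, Pi.add_apply, mul_one]
    rw [hB.apply p (β.orderEmbOfFin hβ t), hB.apply q (β.orderEmbOfFin hβ t)]
  have hM3 : ∀ s : Fin k, M s.castSucc (Fin.last k) =
      B (α.orderEmbOfFin hα s) p + B (α.orderEmbOfFin hα s) q := by
    intro s
    rw [hMdef]
    simp only [Matrix.of_apply]
    rw [orderEmbOfFin_insert_last hα hα', orderEmbOfFin_insert_last hβ hβ']
    simp only [Fin.lastCases_last, Fin.lastCases_castSucc, borderMat_cl,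
      Matrix.mulVec_add, Matrix.mulVec_single_one, Matrix.col_apply, Pi.add_apply, mul_one]
  have hM4 : M (Fin.last k) (Fin.last k) = 0 := by
    rw [hMdef]
    simp only [Matrix.of_apply]
    rw [orderEmbOfFin_insert_last hα hα', orderEmbOfFin_insert_last hβ hβ']
    simp
  have key := det_pq B (fun s => α.orderEmbOfFin hα s) (fun t => β.orderEmbOfFin hβ t) p q
    (exists_orderEmbOfFin_eq hβ hpβ) (exists_orderEmbOfFin_eq hα hqα)
    (by rw [← qMinor_eq_det B hα hβ]; exact hA0) M hM1 hM2 hM3 hM4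
  rw [key]
  exact det_reindex_ne_zero B (s := insert p α) (t := insert q β)
    (by rw [Finset.card_insert_of_notMem hpα, hα])
    (by rw [Finset.card_insert_of_notMem hqβ, hβ])
    (lastCases_inj hpα) (lastCases_inj hqβ)
    (lastCases_mem hα p) (lastCases_mem hβ q) hP

lemma qMinor_kill (B : Matrix (Fin (m+1)) (Fin (m+1)) F) {y : Fin (m+1) → F}
    (hy : y (Fin.last m) = 0) (b : F) :
    qMinor (borderMat B (B.mulVec y) (B.mulVec y) b)
      (ι Finset.univ)
      (insert (Fin.last (m+1)) (ι (ι (Finset.univ : Finset (Fin m))))) = 0 := by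
  have hα' : (ι (Finset.univ : Finset (Fin (m+1)))).card = m + 1 := by
    rw [ι_card, Finset.card_fin]
  have hin : (ι (Finset.univ : Finset (Fin m))).card = m := by
    rw [ι_card, Finset.card_fin]
  have hβ' : (insert (Fin.last (m+1)) (ι (ι (Finset.univ : Finset (Fin m))))).card = m + 1 :=
    card_insert_last hin
  rw [qMinor_eq_det _ hα' hβ']
  set M := Matrix.of fun i j : Fin (m+1) =>
      (borderMat B (B.mulVec y) (B.mulVec y) b)
        ((ι (Finset.univ : Finset (Fin (m+1)))).orderEmbOfFin hα' i)
        ((insert (Fin.last (m+1)) (ι (ι (Finset.univ : Finset (Fin m))))).orderEmbOfFin hβ' j)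
    with hMdef
  rw [← Matrix.exists_mulVec_eq_zero_iff]
  refine ⟨Fin.lastCases (motive := fun _ => F) (-1) (fun t : Fin m => y t.castSucc), ?_, ?_⟩
  · intro hv
    have h2 := congrFun hv (Fin.last m)
    simp only [Fin.lastCases_last, Pi.zero_apply] at h2
    exact absurd h2 (by norm_num)
  · funext i0
    have hexp : (M *ᵥ Fin.lastCases (motive := fun _ => F) (-1)
        (fun t : Fin m => y t.castSucc)) i0 =
        ∑ j : Fin (m+1), M i0 j * Fin.lastCases (motive := fun _ => F) (-1)
          (fun t : Fin m => y t.castSucc) j := rfl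
    rw [hexp]
    have hrow : ∀ i : Fin (m+1),
        (ι (Finset.univ : Finset (Fin (m+1)))).orderEmbOfFin hα' i = i.castSucc := by
      intro i
      rw [orderEmbOfFin_ι (Finset.card_fin (m+1)) hα', orderEmbOfFin_univ]
    have hcol : ∀ t : Fin m,
        (insert (Fin.last (m+1)) (ι (ι (Finset.univ : Finset (Fin m))))).orderEmbOfFin hβ'
          t.castSucc = (t.castSucc).castSucc := by
      intro t
      rw [orderEmbOfFin_insert_last hin hβ']
      simp only [Fin.lastCases_castSucc]
      rw [orderEmbOfFin_ι (Finset.card_fin m) hin, orderEmbOfFin_univ]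
    have hcollast :
        (insert (Fin.last (m+1)) (ι (ι (Finset.univ : Finset (Fin m))))).orderEmbOfFin hβ'
          (Fin.last m) = Fin.last (m+1) := by
      rw [orderEmbOfFin_insert_last hin hβ']
      simp
    rw [Fin.sum_univ_castSucc]
    have hterm : ∀ t : Fin m, M i0 t.castSucc * Fin.lastCases (motive := fun _ => F) (-1)
        (fun t : Fin m => y t.castSucc) t.castSucc = B i0 t.castSucc * y t.castSucc := by
      intro t
      rw [hMdef]
      simp only [Matrix.of_apply, Fin.lastCases_castSucc]
      rw [hrow, hcol, borderMat_cc]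
    rw [Finset.sum_congr rfl (fun t _ => hterm t)]
    have hlast : M i0 (Fin.last m) * Fin.lastCases (motive := fun _ => F) (-1)
        (fun t : Fin m => y t.castSucc) (Fin.last m) = -(B.mulVec y i0) := by
      rw [hMdef]
      simp only [Matrix.of_apply, Fin.lastCases_last]
      rw [hrow, hcollast, borderMat_cl]
      ring
    rw [hlast]
    have hmv : B.mulVec y i0 = ∑ t : Fin m, B i0 t.castSucc * y t.castSucc := by
      have h3 : B.mulVec y i0 = ∑ j : Fin (m+1), B i0 j * y j := rfl
      rw [h3, Fin.sum_univ_castSucc, hy, mul_zero, add_zero]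
    rw [hmv, Pi.zero_apply]
    ring

end Witness

section Poly
open MvPolynomial
variable {F : Type*} [Field F] {m : ℕ}

/-- The generic vector `y`, with the coordinate `last` forced to `0`. -/
noncomputable def Ypoly (m : ℕ) (F : Type*) [Field F] :
    Fin (m+1) → MvPolynomial (Fin (m+2)) F :=
  fun j => if j = Fin.last m then 0 else X j.castSucc

/-- The generic bordered matrix. -/
noncomputable def bigB (B : Matrix (Fin (m+1)) (Fin (m+1)) F) :
    Matrix (Fin (m+2)) (Fin (m+2)) (MvPolynomial (Fin (m+2)) F) :=
  borderMat (B.map C) ((B.map C).mulVec (Ypoly m F)) ((B.map C).mulVec (Ypoly m F))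
    (X (Fin.last (m+1)))

/-- Specialization of the generic `y` at a point. -/
def yOf (v : Fin (m+2) → F) : Fin (m+1) → F :=
  fun j => if j = Fin.last m then 0 else v j.castSucc

lemma yOf_last (v : Fin (m+2) → F) : yOf v (Fin.last m) = 0 := if_pos rfl

lemma yOf_lastCases {y : Fin (m+1) → F} (hy : y (Fin.last m) = 0) (b : F) :
    yOf (Fin.lastCases (motive := fun _ => F) b (fun i : Fin (m+1) => y i)) = y := by
  funext j
  unfold yOf
  rcases eq_or_ne j (Fin.last m) with rfl | hj
  · rw [if_pos rfl, hy]
  · rw [if_neg hj, Fin.lastCases_castSucc]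

lemma bigB_eval (B : Matrix (Fin (m+1)) (Fin (m+1)) F) (v : Fin (m+2) → F) :
    (bigB B).map (eval v) =
      borderMat B (B.mulVec (yOf v)) (B.mulVec (yOf v)) (v (Fin.last (m+1))) := by
  rw [bigB, borderMat_map]
  have h1 : (B.map (C : F →+* MvPolynomial (Fin (m+2)) F)).map (eval v) = B := by
    ext i j
    simp [Matrix.map_apply]
  have h2 : (eval v) ∘ ((B.map (C : F →+* MvPolynomial (Fin (m+2)) F)).mulVec (Ypoly m F)) =
      B.mulVec (yOf v) := by
    funext i
    have h3 : ((B.map (C : F →+* MvPolynomial (Fin (m+2)) F)).mulVec (Ypoly m F)) i =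
        ∑ j, C (B i j) * Ypoly m F j := rfl
    have h4 : B.mulVec (yOf v) i = ∑ j, B i j * yOf v j := rfl
    simp only [Function.comp_apply, h3, h4, map_sum, _root_.map_mul, eval_C]
    refine Finset.sum_congr rfl fun j _ => ?_
    congr 1
    unfold Ypoly yOf
    split_ifs with hj
    · simp
    · simp
  rw [h1, h2, eval_X]

lemma qMinor_bigB_eval (B : Matrix (Fin (m+1)) (Fin (m+1)) F) (v : Fin (m+2) → F)
    (α β : Finset (Fin (m+2))) :
    eval v (qMinor (bigB B) α β) =
      qMinor (borderMat B (B.mulVec (yOf v)) (B.mulVec (yOf v)) (v (Fin.last (m+1)))) α β := by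
  rw [← bigB_eval B v, qMinor_map]

end Poly

section MoreIota
variable {n : ℕ}

lemma ι_mono {s t : Finset (Fin n)} (h : s ⊆ t) : ι s ⊆ ι t := Finset.map_subset_map.2 h

lemma insert_last_inter (s t : Finset (Fin n)) :
    (insert (Fin.last n) (ι s)) ∩ (insert (Fin.last n) (ι t)) =
      insert (Fin.last n) (ι (s ∩ t)) := by
  rw [Finset.insert_inter_of_mem (Finset.mem_insert_self _ _),
    Finset.inter_insert_of_notMem (last_not_mem_ι s), ι_inter]

lemma insert_last_inter_ι (s t : Finset (Fin n)) :
    (insert (Fin.last n) (ι s)) ∩ ι t = ι (s ∩ t) := by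
  rw [Finset.insert_inter_of_notMem (last_not_mem_ι t), ι_inter]

lemma single_at_last {F : Type*} [Field F] {i0 : Fin (n+1)} (h : i0 ≠ Fin.last n) (x : F) :
    Pi.single (M := fun _ => F) i0 x (Fin.last n) = 0 := by
  simp [Pi.single_apply, Ne.symm h]

end MoreIota

section GoodPairs
variable {F : Type*} [Field F] {m : ℕ}

open Classical in
/-- The finite set of index pairs whose generic minors must be nonzero. -/
noncomputable def goodPairs (B : Matrix (Fin (m+1)) (Fin (m+1)) F) :
    Finset (Finset (Fin (m+2)) × Finset (Fin (m+2))) :=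
  Finset.univ.filter (fun pr =>
    (∃ k, IsQPPair k pr.1 pr.2 ∧ 1 ≤ k ∧ k ≤ m ∧ qprEntry B k = QPR.A) ∨
      (pr.1 = Finset.univ ∧ pr.2 = Finset.univ))

lemma mem_goodPairs (B : Matrix (Fin (m+1)) (Fin (m+1)) F)
    (pr : Finset (Fin (m+2)) × Finset (Fin (m+2))) :
    pr ∈ goodPairs B ↔
      ((∃ k, IsQPPair k pr.1 pr.2 ∧ 1 ≤ k ∧ k ≤ m ∧ qprEntry B k = QPR.A) ∨
        (pr.1 = Finset.univ ∧ pr.2 = Finset.univ)) := by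
  classical
  rw [goodPairs, Finset.mem_filter]
  simp only [Finset.mem_univ, true_and]

end GoodPairs

/-- `IsQPPair` does not depend on the `DecidableEq` instance. -/
lemma isQPPair_anyInst {m : Type*} {i1 i2 : DecidableEq m} {k : ℕ} {α β : Finset m}
    (h : @IsQPPair m i1 k α β) : @IsQPPair m i2 k α β := by
  rwa [Subsingleton.elim i2 i1]


/-- over a field of characteristic 0, if `B` is an `n × n` symmetric matrix
with `qpr(B) = q_1 ⋯ q_{n-1} A` and `q_k ∈ {A, S}` for `k = 1, …, n-1`, then there is an
`(n+1) × (n+1)` symmetric matrix `B'` with `qpr(B') = q_1 ⋯ q_{n-1} S A`. -/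
theorem stmt_11 {F : Type*} [Field F] [CharZero F] {n : ℕ} (hn : 0 < n)
    (B : Matrix (Fin n) (Fin n) F) (hB : B.IsSymm)
    (hAS : ∀ k : ℕ, 1 ≤ k → k ≤ n - 1 →
      qprEntry B k = QPR.A ∨ qprEntry B k = QPR.S)
    (hlast : qprEntry B n = QPR.A) :
    ∃ B' : Matrix (Fin (n + 1)) (Fin (n + 1)) F, B'.IsSymm ∧
      (∀ k : ℕ, 1 ≤ k → k ≤ n - 1 → qprEntry B' k = qprEntry B k) ∧
      qprEntry B' n = QPR.S ∧ qprEntry B' (n + 1) = QPR.A := by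
  classical
  obtain ⟨m, rfl⟩ : ∃ m, n = m + 1 := ⟨n - 1, by omega⟩
  have hdet : B.det ≠ 0 := by
    have hA := (qprEntry_eq_A_iff B (m+1)).1 hlast
    have h2 := hA Finset.univ Finset.univ (isQPPair_anyInst (i1 := instDecidableEqFin (m+1))
      ⟨Finset.card_fin _, Finset.card_fin _, by rw [Finset.inter_self, Finset.card_fin]; omega⟩)
    rwa [qMinor_univ] at h2
  have hBC : (B.map (MvPolynomial.C : F →+* MvPolynomial (Fin (m+2)) F)).IsSymm := by
    rw [Matrix.IsSymm, ← Matrix.transpose_map, show Bᵀ = B from hB]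
  have h𝔅symm : (bigB B).IsSymm := borderMat_isSymm _ _ _ hBC
  set 𝒞 : Finset (Finset (Fin (m+2)) × Finset (Fin (m+2))) := goodPairs B with h𝒞
  have evalNe : ∀ (α' β' : Finset (Fin (m+2))) (y : Fin (m+1) → F),
      y (Fin.last m) = 0 → ∀ b : F,
      qMinor (borderMat B (B.mulVec y) (B.mulVec y) b) α' β' ≠ 0 →
      qMinor (bigB B) α' β' ≠ 0 := by
    intro α' β' y hy b hne h0
    apply hne
    have h1 := qMinor_bigB_eval B
      (Fin.lastCases (motive := fun _ => F) b (fun i : Fin (m+1) => y i)) α' β'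
    rw [yOf_lastCases hy b, Fin.lastCases_last] at h1
    rw [← h1, h0, map_zero]
  have claim : ∀ pr ∈ 𝒞, qMinor (bigB B) pr.1 pr.2 ≠ 0 := by
    have rowcase : ∀ (α' β' : Finset (Fin (m+2))) (k : ℕ), IsQPPair k α' β' →
        1 ≤ k → k ≤ m → QPAllNonzero B k →
        Fin.last (m+1) ∈ α' → Fin.last (m+1) ∉ β' →
        qMinor (bigB B) α' β' ≠ 0 := by
      intro α' β' k hqp hk1 hkm hNZ hlα hlβ
      obtain ⟨hcα, hcβ, hint⟩ := hqp
      obtain ⟨k', rfl⟩ : ∃ k', k = k' + 1 := ⟨k - 1, by omega⟩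
      obtain ⟨ah, hah⟩ := exists_ι (Finset.notMem_erase (Fin.last (m+1)) α')
      obtain ⟨bh, hbh⟩ := exists_ι hlβ
      have hα'eq : α' = insert (Fin.last (m+1)) (ι ah) := by
        rw [hah, Finset.insert_erase hlα]
      have hcah : ah.card = k' := by
        have h3 := congrArg Finset.card hah
        rw [ι_card, Finset.card_erase_of_mem hlα, hcα] at h3
        omega
      have hcbh : bh.card = k' + 1 := by
        have h3 := congrArg Finset.card hbh
        rw [ι_card] at h3
        rw [h3, hcβ]
      have hintc : α' ∩ β' = ι (ah ∩ bh) := by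
        rw [hα'eq, ← hbh, insert_last_inter_ι]
      have hsub : ah ⊆ bh := by
        rw [hintc, ι_card] at hint
        have h6 : ah ∩ bh = ah :=
          Finset.eq_of_subset_of_card_le Finset.inter_subset_left (by omega)
        exact Finset.inter_eq_left.mp h6
      have hne : (insert (Fin.last m) ah)ᶜ.Nonempty := by
        rw [← Finset.card_pos, Finset.card_compl]
        have h7 := Finset.card_insert_le (Fin.last m) ah
        rw [Fintype.card_fin]
        omega
      obtain ⟨i0, hi0⟩ := hne
      rw [Finset.mem_compl, Finset.mem_insert] at hi0
      push_neg at hi0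
      obtain ⟨hi0l, hi0α⟩ := hi0
      have htarget : qMinor B (insert i0 ah) bh ≠ 0 := by
        refine hNZ _ _ (isQPPair_anyInst (i1 := instDecidableEqFin (m+1)) ⟨?_, hcbh, ?_⟩)
        · rw [Finset.card_insert_of_notMem hi0α, hcah]
        · have h8 : ah ⊆ (insert i0 ah) ∩ bh :=
            Finset.subset_inter (Finset.subset_insert _ _) hsub
          have h9 := Finset.card_le_card h8
          omega
      refine evalNe α' β' (Pi.single i0 1) (single_at_last hi0l 1) 0 ?_
      rw [hα'eq, ← hbh]
      exact witnessR hB hcah hcbh hi0α htarget 0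
    rintro ⟨α', β'⟩ hpr
    rw [h𝒞, mem_goodPairs] at hpr
    rcases hpr with ⟨k, hqp, hk1, hkm, hA⟩ | ⟨h1, h2⟩
    · have hNZ := (qprEntry_eq_A_iff B k).1 hA
      by_cases hlα : Fin.last (m+1) ∈ α' <;> by_cases hlβ : Fin.last (m+1) ∈ β'
      · -- last in both
        obtain ⟨hcα, hcβ, hint⟩ := hqp
        obtain ⟨k', rfl⟩ : ∃ k', k = k' + 1 := ⟨k - 1, by omega⟩
        obtain ⟨ah, hah⟩ := exists_ι (Finset.notMem_erase (Fin.last (m+1)) α')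
        obtain ⟨bh, hbh⟩ := exists_ι (Finset.notMem_erase (Fin.last (m+1)) β')
        have hα'eq : α' = insert (Fin.last (m+1)) (ι ah) := by
          rw [hah, Finset.insert_erase hlα]
        have hβ'eq : β' = insert (Fin.last (m+1)) (ι bh) := by
          rw [hbh, Finset.insert_erase hlβ]
        have hcah : ah.card = k' := by
          have h3 := congrArg Finset.card hah
          rw [ι_card, Finset.card_erase_of_mem hlα, hcα] at h3
          omega
        have hcbh : bh.card = k' := by
          have h3 := congrArg Finset.card hbh
          rw [ι_card, Finset.card_erase_of_mem hlβ, hcβ] at h3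
          omega
        have hintc : k' - 1 ≤ (ah ∩ bh).card := by
          have h3 : α' ∩ β' = insert (Fin.last (m+1)) (ι (ah ∩ bh)) := by
            rw [hα'eq, hβ'eq, insert_last_inter]
          rw [h3, card_insert_last (rfl : (ah ∩ bh).card = (ah ∩ bh).card)] at hint
          omega
        by_cases h0 : qMinor B ah bh = 0
        · by_cases hex : ∃ i0 : Fin (m+1), i0 ∉ ah ∧ i0 ∉ bh ∧ i0 ≠ Fin.last m
          · obtain ⟨i0, hi0α, hi0β, hi0l⟩ := hex
            have htarget : qMinor B (insert i0 ah) (insert i0 bh) ≠ 0 := by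
              refine hNZ _ _ (isQPPair_anyInst (i1 := instDecidableEqFin (m+1)) ⟨?_, ?_, ?_⟩)
              · rw [Finset.card_insert_of_notMem hi0α, hcah]
              · rw [Finset.card_insert_of_notMem hi0β, hcbh]
              · have hss : insert i0 (ah ∩ bh) ⊆ (insert i0 ah) ∩ (insert i0 bh) := by
                  intro x hx
                  rcases Finset.mem_insert.1 hx with rfl | hx
                  · exact Finset.mem_inter.2 ⟨Finset.mem_insert_self _ _,
                      Finset.mem_insert_self _ _⟩
                  · exact Finset.mem_inter.2
                      ⟨Finset.mem_insert_of_mem (Finset.mem_inter.1 hx).1,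
                       Finset.mem_insert_of_mem (Finset.mem_inter.1 hx).2⟩
                have hcard := Finset.card_le_card hss
                rw [Finset.card_insert_of_notMem
                  (fun h => hi0α (Finset.mem_inter.1 h).1)] at hcard
                omega
            refine evalNe α' β' (Pi.single i0 1) (single_at_last hi0l 1) (B i0 i0) ?_
            rw [hα'eq, hβ'eq]
            exact witnessPi hB hcah hcbh hi0α hi0β htarget
          · push_neg at hex
            have hk'1 : 1 ≤ k' := by
              by_contra hh
              push_neg at hh
              have hk'0 : k' = 0 := by omega
              subst hk'0
              rw [Finset.card_eq_zero] at hcah hcbh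
              rw [hcah, hcbh, qMinor_empty] at h0
              exact one_ne_zero h0
            have huniv : (Finset.univ : Finset (Fin (m+1))) ⊆
                insert (Fin.last m) (ah ∪ bh) := by
              intro x _
              by_cases hxα : x ∈ ah
              · exact Finset.mem_insert_of_mem (Finset.mem_union_left _ hxα)
              by_cases hxβ : x ∈ bh
              · exact Finset.mem_insert_of_mem (Finset.mem_union_right _ hxβ)
              rw [hex x hxα hxβ]
              exact Finset.mem_insert_self _ _
            have hcu1 : m + 1 ≤ (insert (Fin.last m) (ah ∪ bh)).card := by
              have h3 := Finset.card_le_card huniv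
              rwa [Finset.card_fin] at h3
            have hcu2 : (insert (Fin.last m) (ah ∪ bh)).card ≤ (ah ∪ bh).card + 1 :=
              Finset.card_insert_le _ _
            have hcui : (ah ∪ bh).card + (ah ∩ bh).card = k' + k' := by
              rw [Finset.card_union_add_card_inter, hcah, hcbh]
            have hinterle : (ah ∩ bh).card ≤ k' := by
              have hss2 : ah ∩ bh ⊆ ah := Finset.inter_subset_left
              have := Finset.card_le_card hss2
              omega
            have hceq : (ah ∪ bh).card = k' + 1 := by omega
            have hinter : (ah ∩ bh).card = k' - 1 := by omega
            have hlastu : Fin.last m ∉ ah ∪ bh := by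
              intro hmem
              rw [Finset.insert_eq_self.2 hmem] at hcu1
              omega
            have hpne : (bh \ ah).Nonempty := by
              rw [Finset.sdiff_nonempty]
              intro hsub2
              have h4 : bh = ah := Finset.eq_of_subset_of_card_le hsub2 (by omega)
              rw [h4, Finset.inter_self, hcah] at hinter
              omega
            have hqne : (ah \ bh).Nonempty := by
              rw [Finset.sdiff_nonempty]
              intro hsub2
              have h4 : ah = bh := Finset.eq_of_subset_of_card_le hsub2 (by omega)
              rw [h4, Finset.inter_self, hcbh] at hinter
              omega
            obtain ⟨p, hp⟩ := hpne
            rw [Finset.mem_sdiff] at hp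
            obtain ⟨hpβ, hpα⟩ := hp
            obtain ⟨q, hq⟩ := hqne
            rw [Finset.mem_sdiff] at hq
            obtain ⟨hqα, hqβ⟩ := hq
            have hpu : insert p ah = ah ∪ bh := by
              apply Finset.eq_of_subset_of_card_le
              · intro x hx
                rcases Finset.mem_insert.1 hx with rfl | hx
                · exact Finset.mem_union_right _ hpβ
                · exact Finset.mem_union_left _ hx
              · rw [Finset.card_insert_of_notMem hpα, hcah]
                omega
            have hqu : insert q bh = ah ∪ bh := by
              apply Finset.eq_of_subset_of_card_le
              · intro x hx
                rcases Finset.mem_insert.1 hx with rfl | hx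
                · exact Finset.mem_union_left _ hqα
                · exact Finset.mem_union_right _ hx
              · rw [Finset.card_insert_of_notMem hqβ, hcbh]
                omega
            have htarget : qMinor B (insert p ah) (insert q bh) ≠ 0 := by
              refine hNZ _ _ (isQPPair_anyInst (i1 := instDecidableEqFin (m+1)) ⟨?_, ?_, ?_⟩)
              · rw [Finset.card_insert_of_notMem hpα, hcah]
              · rw [Finset.card_insert_of_notMem hqβ, hcbh]
              · rw [hpu, hqu, Finset.inter_self, hceq]
                omega
            have hplast : p ≠ Fin.last m :=
              fun h => hlastu (h ▸ Finset.mem_union_right _ hpβ)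
            have hqlast : q ≠ Fin.last m :=
              fun h => hlastu (h ▸ Finset.mem_union_left _ hqα)
            have hy : (Pi.single (M := fun _ => F) p 1 + Pi.single (M := fun _ => F) q 1)
                (Fin.last m) = 0 := by
              rw [Pi.add_apply, single_at_last hplast 1, single_at_last hqlast 1, add_zero]
            refine evalNe α' β' (Pi.single p 1 + Pi.single q 1) hy 0 ?_
            rw [hα'eq, hβ'eq]
            exact witnessPQ hB hcah hcbh hpβ hpα hqα hqβ h0 htarget
        · refine evalNe α' β' 0 rfl 1 ?_
          rw [hα'eq, hβ'eq]
          exact witnessP0 B hcah hcbh h0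
      · exact rowcase α' β' k hqp hk1 hkm hNZ hlα hlβ
      · rw [qMinor_symm h𝔅symm]
        exact rowcase β' α' k
          ⟨hqp.2.1, hqp.1, by rw [Finset.inter_comm]; exact hqp.2.2⟩ hk1 hkm hNZ hlβ hlα
      · obtain ⟨ah, rfl⟩ := exists_ι hlα
        obtain ⟨bh, rfl⟩ := exists_ι hlβ
        unfold bigB
        rw [qMinor_borderMat_ι, qMinor_map]
        simp only [ne_eq, MvPolynomial.C_eq_zero]
        refine hNZ ah bh (isQPPair_anyInst (i1 := instDecidableEqFin (m+1)) ⟨?_, ?_, ?_⟩)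
        · have := hqp.1
          rwa [ι_card] at this
        · have := hqp.2.1
          rwa [ι_card] at this
        · have := hqp.2.2
          rwa [← ι_inter, ι_card] at this
    · subst h1
      subst h2
      refine evalNe _ _ 0 rfl 1 ?_
      have huniv : (Finset.univ : Finset (Fin (m+2))) =
          insert (Fin.last (m+1)) (ι Finset.univ) := by
        symm
        apply Finset.eq_univ_of_card
        rw [card_insert_last (Finset.card_fin (m+1)), Fintype.card_fin]
      rw [huniv]
      exact witnessP0 B (Finset.card_fin (m+1)) (Finset.card_fin (m+1))
        (by rw [qMinor_univ]; exact hdet)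
  have hprod : (∏ pr ∈ 𝒞, qMinor (bigB B) pr.1 pr.2) ≠ 0 :=
    Finset.prod_ne_zero_iff.mpr claim
  have hexv : ∃ v : Fin (m+2) → F,
      MvPolynomial.eval v (∏ pr ∈ 𝒞, qMinor (bigB B) pr.1 pr.2) ≠ 0 := by
    by_contra hno
    push_neg at hno
    exact hprod (MvPolynomial.funext fun v => by rw [hno v, map_zero])
  obtain ⟨v, hv⟩ := hexv
  set B' := borderMat B (B.mulVec (yOf v)) (B.mulVec (yOf v)) (v (Fin.last (m+1)))
    with hB'def
  have hall : ∀ pr ∈ 𝒞, qMinor B' pr.1 pr.2 ≠ 0 := by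
    intro pr hpr h0
    apply hv
    rw [map_prod]
    refine Finset.prod_eq_zero hpr ?_
    rw [qMinor_bigB_eval B v pr.1 pr.2, ← hB'def]
    exact h0
  refine ⟨B', borderMat_isSymm _ _ _ hB, ?_, ?_, ?_⟩
  · intro k hk1 hkm
    rcases hAS k hk1 hkm with hA | hS
    · rw [hA, qprEntry_eq_A_iff]
      intro α' β' hqp
      exact hall (α', β') (by
        rw [h𝒞, mem_goodPairs]
        exact Or.inl ⟨k, isQPPair_anyInst hqp, hk1, hkm, hA⟩)
    · rw [hS, qprEntry_eq_S_iff]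
      obtain ⟨hnz, hz⟩ := (qprEntry_eq_S_iff B k).1 hS
      constructor
      · intro hallNZ
        apply hnz
        intro α β hqp
        have hqp' := isQPPair_anyInst (i2 := instDecidableEqFin (m+1)) hqp
        have h6 := hallNZ (ι α) (ι β) (isQPPair_anyInst (i1 := instDecidableEqFin (m+2))
          ⟨by rw [ι_card]; exact hqp'.1,
          by rw [ι_card]; exact hqp'.2.1, by rw [← ι_inter, ι_card]; exact hqp'.2.2⟩)
        rwa [hB'def, qMinor_borderMat_ι] at h6
      · intro hallZ
        apply hz
        intro α β hqp
        have hqp' := isQPPair_anyInst (i2 := instDecidableEqFin (m+1)) hqp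
        have h6 := hallZ (ι α) (ι β) (isQPPair_anyInst (i1 := instDecidableEqFin (m+2))
          ⟨by rw [ι_card]; exact hqp'.1,
          by rw [ι_card]; exact hqp'.2.1, by rw [← ι_inter, ι_card]; exact hqp'.2.2⟩)
        rwa [hB'def, qMinor_borderMat_ι] at h6
  · rw [qprEntry_eq_S_iff]
    constructor
    · intro hallNZ
      have hkill := qMinor_kill B (yOf_last v) (v (Fin.last (m+1)))
      rw [← hB'def] at hkill
      have hqp : IsQPPair (m+1) (ι Finset.univ)
          (insert (Fin.last (m+1)) (ι (ι (Finset.univ : Finset (Fin m))))) := by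
        refine ⟨by rw [ι_card, Finset.card_fin],
          by rw [card_insert_last (by rw [ι_card, Finset.card_fin] :
            (ι (Finset.univ : Finset (Fin m))).card = m)], ?_⟩
        have hss : ι (ι (Finset.univ : Finset (Fin m))) ⊆
            ι Finset.univ ∩ insert (Fin.last (m+1)) (ι (ι Finset.univ)) :=
          Finset.subset_inter (ι_mono (Finset.subset_univ _)) (Finset.subset_insert _ _)
        have h7 := Finset.card_le_card hss
        rw [ι_card, ι_card, Finset.card_fin] at h7
        omega
      exact hallNZ _ _ (isQPPair_anyInst hqp) hkill
    · intro hallZ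
      have h6 := hallZ (ι Finset.univ) (ι Finset.univ) (isQPPair_anyInst
        (i1 := instDecidableEqFin (m+2)) ⟨by rw [ι_card, Finset.card_fin], by rw [ι_card, Finset.card_fin],
         by rw [Finset.inter_self, ι_card, Finset.card_fin]; omega⟩)
      rw [hB'def, qMinor_borderMat_ι, qMinor_univ] at h6
      exact hdet h6
  · rw [qprEntry_eq_A_iff]
    intro α' β' hqp
    have hα : α' = Finset.univ :=
      Finset.eq_univ_of_card _ (by rw [hqp.1, Fintype.card_fin])
    have hβ : β' = Finset.univ :=
      Finset.eq_univ_of_card _ (by rw [hqp.2.1, Fintype.card_fin])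
    subst hα
    subst hβ
    exact hall (Finset.univ, Finset.univ) (by
      rw [h𝒞, mem_goodPairs]
      exact Or.inr ⟨rfl, rfl⟩)
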